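/- Let a > −1, b > −1, c > max{0, a−b} be real numbers and d ∈ {0, 1}. Then for every nonnegative integer n and every real x, (d/dx) P_{n+1}^{(d)}(x; a, b, c) = (n+1) P_n^{(1−d)}(x; a+1, b+1, c+d). (The sequence of derivatives of the type II multiple orthogonal polynomials on the step line is again such a sequence, with shifted parameters and with the roles of the two weights interchanged; in particular these polynomials are Hahn-classical.) -/

import Mathlib

/-- Pochhammer symbol `(z)_k = z (z+1) ⋯ (z+k-1)`. -/
noncomputable def poch (z : ℝ) (k : ℕ) : ℝ := ∏ i ∈ Finset.range k, (z + i)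

/-- The monic type II multiple orthogonal polynomial on the step line:
`P_n^{(d)}(x; a, b, c) = Σ_{j=0}^n (−1)^{n−j} C(n,j)
  ((a+1+j)_{n−j}(b+1+j)_{n−j}/(c+b+1+⌊(n+d)/2⌋+j)_{n−j}) x^j`. -/
noncomputable def Ptype2 (d : ℕ) (a b c : ℝ) (n : ℕ) (x : ℝ) : ℝ :=
  ∑ j ∈ Finset.range (n + 1),
    (-1 : ℝ) ^ (n - j) * (n.choose j : ℝ) *
      (poch (a + 1 + j) (n - j) * poch (b + 1 + j) (n - j) /
        poch (c + b + 1 + (((n + d) / 2 : ℕ) : ℝ) + j) (n - j)) * x ^ j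

theorem deriv_Ptype2 (a b c : ℝ) (ha : a > -1) (hb : b > -1)
    (hc : c > max 0 (a - b)) (d : ℕ) (hd : d ≤ 1) (n : ℕ) (x : ℝ) :
    deriv (fun y => Ptype2 d a b c (n + 1) y) x
      = (n + 1) * Ptype2 (1 - d) (a + 1) (b + 1) (c + d) n x := by
  -- coefficient function
  set C : ℕ → ℝ := fun j =>
    (-1 : ℝ) ^ (n + 1 - j) * ((n+1).choose j : ℝ) *
      (poch (a + 1 + j) (n + 1 - j) * poch (b + 1 + j) (n + 1 - j) /
        poch (c + b + 1 + (((n + 1 + d) / 2 : ℕ) : ℝ) + j) (n + 1 - j)) with hC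
  have h1 : deriv (fun y => Ptype2 d a b c (n + 1) y) x
      = ∑ j ∈ Finset.range (n + 2), C j * (j * x ^ (j - 1)) := by
    simp only [Ptype2, hC]
    rw [deriv_fun_sum]
    · refine Finset.sum_congr rfl fun j _ => ?_
      rw [deriv_const_mul _ (differentiableAt_pow j), deriv_pow_field]
    · intro j _
      exact (differentiableAt_const _).mul (differentiableAt_pow j)
  rw [h1, Finset.sum_range_succ']
  simp only [Nat.cast_zero, zero_mul, mul_zero, add_zero]
  rw [Ptype2, Finset.mul_sum]
  refine Finset.sum_congr rfl fun j hj => ?_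
  have hj' : j ≤ n := Nat.lt_succ_iff.mp (Finset.mem_range.mp hj)
  have hsub : n + 1 - (j + 1) = n - j := by omega
  have hfloor : (n + 1 + d) / 2 = d + (n + (1 - d)) / 2 := by omega
  have hchoose : ((j : ℝ) + 1) * ((n+1).choose (j+1) : ℝ) = ((n : ℝ) + 1) * (n.choose j : ℝ) := by
    have := Nat.add_one_mul_choose_eq n j
    have : ((n+1) * n.choose j : ℕ) = ((n+1).choose (j+1) * (j+1) : ℕ) := this
    have h2 : ((n : ℝ)+1) * (n.choose j : ℝ) = ((n+1).choose (j+1) : ℝ) * ((j:ℝ)+1) := by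
      exact_mod_cast congrArg (Nat.cast : ℕ → ℝ) this
    linarith [h2]
  have ha1 : (a + 1 + ((j:ℝ) + 1)) = (a + 1) + 1 + j := by ring
  have hb1 : (b + 1 + ((j:ℝ) + 1)) = (b + 1) + 1 + j := by ring
  have hc1 : (c + b + 1 + (((n + 1 + d) / 2 : ℕ) : ℝ) + ((j:ℝ) + 1))
      = (c + d) + (b + 1) + 1 + (((n + (1 - d)) / 2 : ℕ) : ℝ) + j := by
    rw [hfloor]; push_cast; ring
  simp only [hC, hsub, Nat.cast_add, Nat.cast_one, ha1, hb1, hc1, Nat.add_sub_cancel]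
  linear_combination (((-1:ℝ)^(n-j)) *
    (poch ((a+1)+1+j) (n-j) * poch ((b+1)+1+j) (n-j) /
      poch ((c+d)+(b+1)+1+(((n+(1-d))/2 : ℕ) : ℝ)+j) (n-j)) * x^j) * hchoose
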